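/- Let k ≥ 1, let G be a k-edge-connected finite simple graph on V, fix a root r ∈ V, and let u₀, …, u_t together with k-cuts S₀, …, S_{t+1} form a snug chain. Let v ∈ S₀ and let 0 ≤ i < j ≤ t. Then every k-cut S of G that is crossed by the pair {v, u_i} is also crossed by the pair {v, u_j}. -/
import Mathlib


open Finset

variable {V : Type*} [Fintype V] [DecidableEq V]

/-- `Crosses S e`: exactly one endpoint of the edge/link `e` lies in `S`. -/
def Crosses (S : Finset V) (e : Sym2 V) : Prop :=
  ∃ x y : V, e = s(x, y) ∧ x ∈ S ∧ y ∉ S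

instance (S : Finset V) : DecidablePred (Crosses S) := fun e =>
  decidable_of_iff (∃ x y : V, e = s(x, y) ∧ x ∈ S ∧ y ∉ S) Iff.rfl

/-- The cut `δ(S)`: edges of `G` with exactly one endpoint in `S`. -/
def cutEdges (G : SimpleGraph V) [DecidableRel G.Adj] (S : Finset V) :
    Finset (Sym2 V) :=
  G.edgeFinset.filter fun e => Crosses S e

/-- `G` is `k`-edge-connected: every nonempty proper cut has at least `k` crossing edges. -/
def EdgeConnected (G : SimpleGraph V) [DecidableRel G.Adj] (k : ℕ) : Prop :=
  ∀ S : Finset V, S.Nonempty → S ≠ Finset.univ → k ≤ (cutEdges G S).card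

/-- `S` is a `k`-cut: a nonempty proper vertex set with exactly `k` crossing edges. -/
def IsCut (G : SimpleGraph V) [DecidableRel G.Adj] (k : ℕ) (S : Finset V) : Prop :=
  S.Nonempty ∧ S ≠ Finset.univ ∧ (cutEdges G S).card = k

/-- `(S₁, S₂)` are snug shores for `v` (with respect to the root `r`):
two `k`-cuts avoiding `r` with `v ∉ S₁` and `S₂ = S₁ ∪ {v}`. -/
def SnugShores (G : SimpleGraph V) [DecidableRel G.Adj] (k : ℕ) (r v : V)
    (S₁ S₂ : Finset V) : Prop :=
  IsCut G k S₁ ∧ IsCut G k S₂ ∧ r ∉ S₁ ∧ r ∉ S₂ ∧ v ∉ S₁ ∧ S₂ = insert v S₁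

/-- `v` is a snug vertex (with respect to the root `r`). -/
def Snug (G : SimpleGraph V) [DecidableRel G.Adj] (k : ℕ) (r v : V) : Prop :=
  v ≠ r ∧ k + 1 ≤ G.degree v ∧ ∃ S₁ S₂ : Finset V, SnugShores G k r v S₁ S₂

/-- A snug chain: snug vertices `u 0, …, u t` together with `k`-cuts
`S 0, …, S (t+1)` such that `(S i, S (i+1))` are snug shores for `u i`. -/
def IsSnugChain (G : SimpleGraph V) [DecidableRel G.Adj] (k : ℕ) (r : V)
    (t : ℕ) (u : ℕ → V) (S : ℕ → Finset V) : Prop :=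
  ∀ i ≤ t, Snug G k r (u i) ∧ SnugShores G k r (u i) (S i) (S (i + 1))

set_option linter.unusedSectionVars false
set_option linter.unusedVariables false
set_option linter.unreachableTactic false
set_option linter.unusedTactic false

def Between (X Y : Finset V) (e : Sym2 V) : Prop :=
  ∃ x y : V, e = s(x, y) ∧ x ∈ X ∧ y ∈ Y

instance (X Y : Finset V) : DecidablePred (Between X Y) := fun e =>
  decidable_of_iff (∃ x y : V, e = s(x, y) ∧ x ∈ X ∧ y ∈ Y) Iff.rfl

def eCount (G : SimpleGraph V) [DecidableRel G.Adj] (X Y : Finset V) : ℕ :=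
  (G.edgeFinset.filter fun e => Between X Y e).card

lemma crosses_iff (S : Finset V) (x y : V) :
    Crosses S s(x, y) ↔ (x ∈ S ∧ y ∉ S) ∨ (y ∈ S ∧ x ∉ S) := by
  constructor
  · rintro ⟨a, b, hab, ha, hb⟩
    rw [Sym2.eq_iff] at hab
    rcases hab with ⟨rfl, rfl⟩ | ⟨rfl, rfl⟩
    · exact Or.inl ⟨ha, hb⟩
    · exact Or.inr ⟨ha, hb⟩
  · rintro (⟨h1, h2⟩ | ⟨h1, h2⟩)
    · exact ⟨x, y, rfl, h1, h2⟩
    · exact ⟨y, x, Sym2.eq_swap, h1, h2⟩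

lemma between_iff (X Y : Finset V) (x y : V) :
    Between X Y s(x, y) ↔ (x ∈ X ∧ y ∈ Y) ∨ (y ∈ X ∧ x ∈ Y) := by
  constructor
  · rintro ⟨a, b, hab, ha, hb⟩
    rw [Sym2.eq_iff] at hab
    rcases hab with ⟨rfl, rfl⟩ | ⟨rfl, rfl⟩
    · exact Or.inl ⟨ha, hb⟩
    · exact Or.inr ⟨ha, hb⟩
  · rintro (⟨h1, h2⟩ | ⟨h1, h2⟩)
    · exact ⟨x, y, rfl, h1, h2⟩
    · exact ⟨y, x, Sym2.eq_swap, h1, h2⟩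

lemma crosses_compl (S : Finset V) (e : Sym2 V) : Crosses Sᶜ e ↔ Crosses S e := by
  refine Sym2.inductionOn e fun x y => ?_
  rw [crosses_iff, crosses_iff]
  simp only [Finset.mem_compl, not_not]
  tauto

lemma between_comm (X Y : Finset V) (e : Sym2 V) : Between X Y e ↔ Between Y X e := by
  refine Sym2.inductionOn e fun x y => ?_
  rw [between_iff, between_iff]; tauto

variable (G : SimpleGraph V) [DecidableRel G.Adj]

lemma cutEdges_compl (S : Finset V) : cutEdges G Sᶜ = cutEdges G S :=
  Finset.filter_congr fun e _ => crosses_compl S e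

lemma eCount_comm (X Y : Finset V) : eCount G X Y = eCount G Y X := by
  unfold eCount
  rw [Finset.filter_congr fun e _ => between_comm X Y e]

lemma esum_eq {f g : Sym2 V → ℕ} (h : ∀ x y, G.Adj x y → f s(x, y) = g s(x, y)) :
    ∑ e ∈ G.edgeFinset, f e = ∑ e ∈ G.edgeFinset, g e := by
  refine Finset.sum_congr rfl fun e he => ?_
  rw [SimpleGraph.mem_edgeFinset] at he
  revert he
  refine Sym2.inductionOn e fun x y he => h x y ?_
  rwa [SimpleGraph.mem_edgeSet] at he

lemma card_cutEdges_eq_sum (A : Finset V) :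
    (cutEdges G A).card = ∑ e ∈ G.edgeFinset, if Crosses A e then 1 else 0 :=
  Finset.card_filter _ _

lemma eCount_eq_sum (X Y : Finset V) :
    eCount G X Y = ∑ e ∈ G.edgeFinset, if Between X Y e then 1 else 0 :=
  Finset.card_filter _ _

lemma degree_eq_sum (v : V) :
    G.degree v = ∑ e ∈ G.edgeFinset, if v ∈ e then 1 else 0 := by
  rw [← SimpleGraph.card_incidenceFinset_eq_degree, SimpleGraph.incidenceFinset_eq_filter]
  exact Finset.card_filter _ _

/-- submodularity identity -/
lemma ident1 (A B : Finset V) :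
    (cutEdges G A).card + (cutEdges G B).card =
      (cutEdges G (A ∩ B)).card + (cutEdges G (A ∪ B)).card
        + 2 * eCount G (A \ B) (B \ A) := by
  rw [card_cutEdges_eq_sum, card_cutEdges_eq_sum, card_cutEdges_eq_sum,
    card_cutEdges_eq_sum, eCount_eq_sum, ← Finset.sum_add_distrib, Finset.mul_sum,
    ← Finset.sum_add_distrib, ← Finset.sum_add_distrib]
  refine esum_eq G fun x y hadj => ?_
  simp only [crosses_iff, between_iff]
  by_cases hxA : x ∈ A <;> by_cases hxB : x ∈ B <;> by_cases hyA : y ∈ A <;>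
    by_cases hyB : y ∈ B <;>
    simp [hxA, hxB, hyA, hyB]

/-- second submodularity identity -/
lemma ident2 (A B : Finset V) :
    (cutEdges G A).card + (cutEdges G B).card =
      (cutEdges G (A \ B)).card + (cutEdges G (B \ A)).card
        + 2 * eCount G (A ∩ B) (A ∪ B)ᶜ := by
  have h := ident1 G A Bᶜ
  have e1 : A ∩ Bᶜ = A \ B := by ext z; simp
  have e2 : A ∪ Bᶜ = (B \ A)ᶜ := by ext z; simp; tauto
  have e3 : A \ Bᶜ = A ∩ B := by ext z; simp
  have e4 : Bᶜ \ A = (A ∪ B)ᶜ := by ext z; simp; tauto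
  rw [e1, e2, e3, e4, cutEdges_compl, cutEdges_compl] at h
  omega

/-- decomposition of a cut by the four regions of a second set -/
lemma ident3 (A B : Finset V) :
    (cutEdges G A).card =
      eCount G (A ∩ B) (B \ A) + eCount G (A ∩ B) (A ∪ B)ᶜ
        + eCount G (A \ B) (B \ A) + eCount G (A \ B) (A ∪ B)ᶜ := by
  rw [card_cutEdges_eq_sum, eCount_eq_sum, eCount_eq_sum, eCount_eq_sum, eCount_eq_sum,
    ← Finset.sum_add_distrib, ← Finset.sum_add_distrib, ← Finset.sum_add_distrib]
  refine esum_eq G fun x y hadj => ?_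
  simp only [crosses_iff, between_iff]
  by_cases hxA : x ∈ A <;> by_cases hxB : x ∈ B <;> by_cases hyA : y ∈ A <;>
    by_cases hyB : y ∈ B <;>
    simp [hxA, hxB, hyA, hyB]

lemma ident4 (A B : Finset V) :
    (cutEdges G (A ∩ B)).card =
      eCount G (A ∩ B) (A \ B) + eCount G (A ∩ B) (B \ A)
        + eCount G (A ∩ B) (A ∪ B)ᶜ := by
  rw [card_cutEdges_eq_sum, eCount_eq_sum, eCount_eq_sum, eCount_eq_sum,
    ← Finset.sum_add_distrib, ← Finset.sum_add_distrib]
  refine esum_eq G fun x y hadj => ?_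
  simp only [crosses_iff, between_iff]
  by_cases hxA : x ∈ A <;> by_cases hxB : x ∈ B <;> by_cases hyA : y ∈ A <;>
    by_cases hyB : y ∈ B <;>
    simp [hxA, hxB, hyA, hyB]

lemma ident5 (A B : Finset V) :
    (cutEdges G (A \ B)).card =
      eCount G (A \ B) (A ∩ B) + eCount G (A \ B) (B \ A)
        + eCount G (A \ B) (A ∪ B)ᶜ := by
  rw [card_cutEdges_eq_sum, eCount_eq_sum, eCount_eq_sum, eCount_eq_sum,
    ← Finset.sum_add_distrib, ← Finset.sum_add_distrib]
  refine esum_eq G fun x y hadj => ?_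
  simp only [crosses_iff, between_iff]
  by_cases hxA : x ∈ A <;> by_cases hxB : x ∈ B <;> by_cases hyA : y ∈ A <;>
    by_cases hyB : y ∈ B <;>
    simp [hxA, hxB, hyA, hyB]

/-- adding a vertex to a set -/
lemma ident6 {w : V} {T : Finset V} (hw : w ∉ T) :
    (cutEdges G (insert w T)).card + 2 * eCount G {w} T =
      (cutEdges G T).card + G.degree w := by
  rw [card_cutEdges_eq_sum, card_cutEdges_eq_sum, eCount_eq_sum, degree_eq_sum,
    Finset.mul_sum, ← Finset.sum_add_distrib, ← Finset.sum_add_distrib]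
  refine esum_eq G fun x y hadj => ?_
  have hxy : x ≠ y := G.ne_of_adj hadj
  simp only [crosses_iff, between_iff, Finset.mem_insert, Finset.mem_singleton,
    Sym2.mem_iff]
  by_cases hx : x = w <;> by_cases hy : y = w <;>
    by_cases hxT : x ∈ T <;> by_cases hyT : y ∈ T <;>
    simp_all [eq_comm]

lemma cut_singleton (u : V) : (cutEdges G {u}).card = G.degree u := by
  rw [card_cutEdges_eq_sum, degree_eq_sum]
  refine esum_eq G fun x y hadj => ?_
  have hxy : x ≠ y := G.ne_of_adj hadj
  simp only [crosses_iff, Finset.mem_singleton, Sym2.mem_iff]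
  by_cases hx : x = u <;> by_cases hy : y = u <;> simp_all [eq_comm]

lemma ident7 {u : V} {T : Finset V} (hu : u ∉ T) :
    eCount G {u} T + eCount G {u} (insert u T)ᶜ = G.degree u := by
  rw [eCount_eq_sum, eCount_eq_sum, degree_eq_sum, ← Finset.sum_add_distrib]
  refine esum_eq G fun x y hadj => ?_
  have hxy : x ≠ y := G.ne_of_adj hadj
  simp only [between_iff, Finset.mem_singleton, Finset.mem_compl, Finset.mem_insert,
    Sym2.mem_iff]
  by_cases hx : x = u <;> by_cases hy : y = u <;>
    by_cases hxT : x ∈ T <;> by_cases hyT : y ∈ T <;>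
    simp_all [eq_comm]

lemma eCount_mono {X X' Y Y' : Finset V} (hX : X ⊆ X') (hY : Y ⊆ Y') :
    eCount G X Y ≤ eCount G X' Y' := by
  refine Finset.card_le_card fun e he => ?_
  rw [Finset.mem_filter] at he ⊢
  obtain ⟨hem, a, b, rfl, ha, hb⟩ := he
  exact ⟨hem, a, b, rfl, hX ha, hY hb⟩

lemma eCount_union_le (X Y Z : Finset V) :
    eCount G X (Y ∪ Z) ≤ eCount G X Y + eCount G X Z := by
  refine le_trans (Finset.card_le_card fun e he => ?_) (Finset.card_union_le _ _)
  rw [Finset.mem_filter] at he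
  obtain ⟨hem, a, b, rfl, ha, hb⟩ := he
  rw [Finset.mem_union, Finset.mem_filter, Finset.mem_filter]
  rcases Finset.mem_union.1 hb with h | h
  · exact Or.inl ⟨hem, a, b, rfl, ha, h⟩
  · exact Or.inr ⟨hem, a, b, rfl, ha, h⟩

lemma ne_univ_of_not_mem {a : V} {s : Finset V} (h : a ∉ s) : s ≠ Finset.univ :=
  fun he => h (he ▸ Finset.mem_univ a)

lemma isCut_compl {G : SimpleGraph V} [DecidableRel G.Adj] {k : ℕ} {S : Finset V}
    (h : IsCut G k S) : IsCut G k Sᶜ := by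
  obtain ⟨h1, h2, h3⟩ := h
  exact ⟨Finset.nonempty_iff_ne_empty.2 (fun hc => h2 ((Finset.compl_eq_empty_iff S).1 hc)),
    (Finset.compl_ne_univ_iff_nonempty S).2 h1, by rw [cutEdges_compl]; exact h3⟩

lemma tight (k : ℕ) (hG : EdgeConnected G k) (r u : V) (T0 : Finset V)
    (huT0 : u ∉ T0) (hT0 : IsCut G k T0) (hT1 : IsCut G k (insert u T0))
    (hrT1 : r ∉ insert u T0) (hdeg : k + 1 ≤ G.degree u)
    (S : Finset V) (hS : IsCut G k S) (hrS : r ∉ S)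
    (hP : ((insert u T0) ∩ S).Nonempty) (hQ : ((insert u T0) \ S).Nonempty)
    (hR : (S \ (insert u T0)).Nonempty) : False := by
  have hrP : r ∉ (insert u T0) ∩ S := fun h => hrS (Finset.mem_inter.1 h).2
  have hrU : r ∉ (insert u T0) ∪ S := fun h => (Finset.mem_union.1 h).elim hrT1 hrS
  have hrQ : r ∉ (insert u T0) \ S := fun h => hrT1 (Finset.mem_sdiff.1 h).1
  have hrR : r ∉ S \ (insert u T0) := fun h => hrS (Finset.mem_sdiff.1 h).1
  have hUne : ((insert u T0) ∪ S).Nonempty := by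
    obtain ⟨z, hz⟩ := hP
    exact ⟨z, Finset.mem_union.2 (Or.inl (Finset.mem_inter.1 hz).1)⟩
  have cP := hG _ hP (ne_univ_of_not_mem hrP)
  have cU := hG _ hUne (ne_univ_of_not_mem hrU)
  have cQ := hG _ hQ (ne_univ_of_not_mem hrQ)
  have cR := hG _ hR (ne_univ_of_not_mem hrR)
  have h1 := ident1 G (insert u T0) S
  have h2 := ident2 G (insert u T0) S
  have h3 := ident3 G (insert u T0) S
  have h4 := ident4 G (insert u T0) S
  have h5 := ident5 G (insert u T0) S
  have hcT1 : (cutEdges G (insert u T0)).card = k := hT1.2.2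
  have hcT0 : (cutEdges G T0).card = k := hT0.2.2
  have hcS : (cutEdges G S).card = k := hS.2.2
  have h6 := ident6 G huT0
  have h7 := ident7 G huT0
  have hcomm := eCount_comm G ((insert u T0) \ S) ((insert u T0) ∩ S)
  have hTc : (insert u T0)ᶜ = (S \ (insert u T0)) ∪ ((insert u T0) ∪ S)ᶜ := by
    ext z; simp; tauto
  have hb1 : eCount G {u} (insert u T0)ᶜ ≤
      eCount G {u} (S \ (insert u T0)) + eCount G {u} ((insert u T0) ∪ S)ᶜ := by
    rw [hTc]; exact eCount_union_le G _ _ _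
  by_cases huS : u ∈ S
  · have hsub : {u} ⊆ (insert u T0) ∩ S := by
      simp [Finset.singleton_subset_iff, Finset.mem_inter, huS]
    have hb2 : eCount G {u} (S \ (insert u T0)) ≤
        eCount G ((insert u T0) ∩ S) (S \ (insert u T0)) :=
      eCount_mono G hsub (le_refl _)
    have hb3 : eCount G {u} ((insert u T0) ∪ S)ᶜ ≤
        eCount G ((insert u T0) ∩ S) ((insert u T0) ∪ S)ᶜ :=
      eCount_mono G hsub (le_refl _)
    omega
  · have hsub : {u} ⊆ (insert u T0) \ S := by
      simp [Finset.singleton_subset_iff, Finset.mem_sdiff, huS]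
    have hb2 : eCount G {u} (S \ (insert u T0)) ≤
        eCount G ((insert u T0) \ S) (S \ (insert u T0)) :=
      eCount_mono G hsub (le_refl _)
    have hb3 : eCount G {u} ((insert u T0) ∪ S)ᶜ ≤
        eCount G ((insert u T0) \ S) ((insert u T0) ∪ S)ᶜ :=
      eCount_mono G hsub (le_refl _)
    omega

lemma core (k : ℕ) (hG : EdgeConnected G k) (r u v w : V) (T0 : Finset V)
    (hT0 : IsCut G k T0) (huT0 : u ∉ T0) (hT1 : IsCut G k (insert u T0))
    (hrT1 : r ∉ insert u T0) (hdeg : k + 1 ≤ G.degree u)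
    (hv : v ∈ T0) (hw : w ∉ insert u T0)
    (S : Finset V) (hS : IsCut G k S) (hrS : r ∉ S) :
    ((v ∈ S ∧ u ∉ S) → w ∉ S) ∧ ((v ∉ S ∧ u ∈ S) → w ∈ S) := by
  have hrT0 : r ∉ T0 := fun h => hrT1 (Finset.mem_insert_of_mem h)
  constructor
  · rintro ⟨hvS, huS⟩ hwS
    exact tight G k hG r u T0 huT0 hT0 hT1 hrT1 hdeg S hS hrS
      ⟨v, Finset.mem_inter.2 ⟨Finset.mem_insert_of_mem hv, hvS⟩⟩
      ⟨u, Finset.mem_sdiff.2 ⟨Finset.mem_insert_self u T0, huS⟩⟩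
      ⟨w, Finset.mem_sdiff.2 ⟨hwS, hw⟩⟩
  · rintro ⟨hvS, huS⟩
    by_contra hwS
    by_cases hRne : (S \ insert u T0).Nonempty
    · exact tight G k hG r u T0 huT0 hT0 hT1 hrT1 hdeg S hS hrS
        ⟨u, Finset.mem_inter.2 ⟨Finset.mem_insert_self u T0, huS⟩⟩
        ⟨v, Finset.mem_sdiff.2 ⟨Finset.mem_insert_of_mem hv, hvS⟩⟩ hRne
    · have hsub : S ⊆ insert u T0 := by
        rw [← Finset.sdiff_eq_empty_iff_subset]
        exact Finset.not_nonempty_iff_eq_empty.1 hRne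
      have hSu : S \ T0 = {u} := by
        apply Finset.Subset.antisymm
        · intro z hz
          rw [Finset.mem_sdiff] at hz
          rcases Finset.mem_insert.1 (hsub hz.1) with h | h
          · simp [h]
          · exact absurd h hz.2
        · simp [Finset.singleton_subset_iff, Finset.mem_sdiff, huS, huT0]
      have h2 := ident2 G T0 S
      have hQk : k ≤ (cutEdges G (T0 \ S)).card :=
        hG _ ⟨v, Finset.mem_sdiff.2 ⟨hv, hvS⟩⟩
          (ne_univ_of_not_mem (fun h => hrT0 (Finset.mem_sdiff.1 h).1))
      rw [hSu] at h2
      have hsing := cut_singleton G u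
      have hcT0 : (cutEdges G T0).card = k := hT0.2.2
      have hcS : (cutEdges G S).card = k := hS.2.2
      omega

lemma step (k : ℕ) (hG : EdgeConnected G k) (r u v w : V) (T0 : Finset V)
    (hT0 : IsCut G k T0) (huT0 : u ∉ T0) (hT1 : IsCut G k (insert u T0))
    (hrT1 : r ∉ insert u T0) (hdeg : k + 1 ≤ G.degree u)
    (hv : v ∈ T0) (hw : w ∉ insert u T0)
    (S : Finset V) (hS : IsCut G k S) (hcross : Crosses S s(v, u)) :
    Crosses S s(v, w) := by
  rw [crosses_iff] at hcross ⊢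
  by_cases hrS : r ∈ S
  · have hSc : IsCut G k Sᶜ := isCut_compl hS
    have hrSc : r ∉ Sᶜ := by simp [hrS]
    have hc := core G k hG r u v w T0 hT0 huT0 hT1 hrT1 hdeg hv hw Sᶜ hSc hrSc
    rcases hcross with ⟨hvS, huS⟩ | ⟨huS, hvS⟩
    · have hres := hc.2 ⟨by simp [hvS], by simp [huS]⟩
      exact Or.inl ⟨hvS, by simpa using hres⟩
    · have hres := hc.1 ⟨by simp [hvS], by simp [huS]⟩
      exact Or.inr ⟨by simpa using hres, hvS⟩
  · have hc := core G k hG r u v w T0 hT0 huT0 hT1 hrT1 hdeg hv hw S hS hrS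
    rcases hcross with ⟨hvS, huS⟩ | ⟨huS, hvS⟩
    · exact Or.inl ⟨hvS, hc.1 ⟨hvS, huS⟩⟩
    · exact Or.inr ⟨hc.2 ⟨hvS, huS⟩, hvS⟩

/-- Along a snug chain, for `v ∈ S₀` and `i < j ≤ t`, every `k`-cut crossed by
the link `{v, u i}` is also crossed by the link `{v, u j}`. -/
theorem link_furthest_out
    (k : ℕ) (hk : 1 ≤ k) (G : SimpleGraph V) [DecidableRel G.Adj]
    (hG : EdgeConnected G k) (r : V)
    (t : ℕ) (u : ℕ → V) (Sc : ℕ → Finset V)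
    (hchain : IsSnugChain G k r t u Sc)
    (v : V) (hv : v ∈ Sc 0)
    (i j : ℕ) (hij : i < j) (hjt : j ≤ t)
    (S : Finset V) (hS : IsCut G k S) (hcross : Crosses S s(v, u i)) :
    Crosses S s(v, u j) := by
  have hmono : ∀ m, m ≤ t + 1 → Sc 0 ⊆ Sc m := by
    intro m
    induction m with
    | zero => intro _; exact Finset.Subset.refl _
    | succ n ih =>
      intro hn
      have hnt : n ≤ t := by omega
      have hss := (hchain n hnt).2.2.2.2.2.2
      rw [hss]
      exact (ih (by omega)).trans (Finset.subset_insert _ _)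
  have hstep : ∀ m, m + 1 ≤ t → Crosses S s(v, u m) → Crosses S s(v, u (m + 1)) := by
    intro m hm hc
    obtain ⟨hsnug, hshores⟩ := hchain m (by omega)
    obtain ⟨hT0cut, hT1cut, hr0, hr1, hu0, heq⟩ := hshores
    obtain ⟨-, hdeg, -⟩ := hsnug
    have hw : u (m + 1) ∉ Sc (m + 1) := (hchain (m + 1) hm).2.2.2.2.2.1
    rw [heq] at hT1cut hr1 hw
    exact step G k hG r (u m) v (u (m + 1)) (Sc m) hT0cut hu0 hT1cut hr1 hdeg
      (hmono m (by omega) hv) hw S hS hc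
  have H : ∀ d, i + d ≤ j → Crosses S s(v, u (i + d)) := by
    intro d
    induction d with
    | zero => intro _; exact hcross
    | succ n ih =>
      intro hd
      have hres := hstep (i + n) (by omega) (ih (by omega))
      have : i + n + 1 = i + (n + 1) := by omega
      rwa [this] at hres
  have hfin := H (j - i) (by omega)
  have hji : i + (j - i) = j := by omega
  rwa [hji] at hfin
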